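/- For a unit vector p ∈ S^{m−1} and t ∈ [0,1), the image of the closed hemisphere H_p = {y ∈ S^{m−1} : y·p ≤ 0} under the Möbius transformation T_{tp} equals the spherical cap {y ∈ S^{m−1} : y·p ≤ 2t/(1+t²)}. -/

import Mathlib

open scoped RealInnerProductSpace

/-- The Möbius transformation `T_x` of the closed unit ball in `ℝ^m`,
`T_x(y) = ((1 + 2x·y + |y|²)x + (1 − |x|²)y) / (1 + 2x·y + |x|²|y|²)`. -/
noncomputable def mobiusT {m : ℕ} (x y : EuclideanSpace ℝ (Fin m)) :
    EuclideanSpace ℝ (Fin m) :=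
  (1 + 2 * ⟪x, y⟫ + ‖x‖ ^ 2 * ‖y‖ ^ 2)⁻¹ •
    ((1 + 2 * ⟪x, y⟫ + ‖y‖ ^ 2) • x + (1 - ‖x‖ ^ 2) • y)

lemma aux_Dpos {u s : ℝ} (hu : |u| < 1) (hs : |s| ≤ 1) :
    0 < 1 + 2 * u * s + u ^ 2 := by
  have h1 : |u * s| ≤ |u| := by
    rw [abs_mul]; exact mul_le_of_le_one_right (abs_nonneg u) hs
  nlinarith [neg_abs_le (u * s), sq_abs u, sq_nonneg (1 - |u|), abs_nonneg u]

lemma aux_expand {m : ℕ} (p y : EuclideanSpace ℝ (Fin m)) (hp : ‖p‖ = 1)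
    (hy : ‖y‖ = 1) (u : ℝ) :
    mobiusT (u • p) y
      = ((2 * u * (1 + u * ⟪p, y⟫)) / (1 + 2 * u * ⟪p, y⟫ + u ^ 2)) • p
        + ((1 - u ^ 2) / (1 + 2 * u * ⟪p, y⟫ + u ^ 2)) • y := by
  unfold mobiusT
  simp only [real_inner_smul_left, norm_smul, Real.norm_eq_abs, hp, hy, mul_one,
    one_pow, mul_pow, sq_abs]
  match_scalars <;> ring

lemma aux_inner {m : ℕ} (p y : EuclideanSpace ℝ (Fin m)) (hp : ‖p‖ = 1) (α β : ℝ) :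
    ⟪p, α • p + β • y⟫ = α + β * ⟪p, y⟫ := by
  rw [inner_add_right, real_inner_smul_right, real_inner_smul_right,
    real_inner_self_eq_norm_sq, hp]
  ring

lemma aux_norm {m : ℕ} (p y : EuclideanSpace ℝ (Fin m)) (hp : ‖p‖ = 1)
    (hy : ‖y‖ = 1) (α β : ℝ) :
    ‖α • p + β • y‖ ^ 2 = α ^ 2 + 2 * α * β * ⟪p, y⟫ + β ^ 2 := by
  rw [norm_add_sq_real]
  simp only [norm_smul, Real.norm_eq_abs, hp, hy, mul_one, mul_pow, sq_abs,
    real_inner_smul_left, real_inner_smul_right]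
  ring

lemma aux_inner_le_one {m : ℕ} (p y : EuclideanSpace ℝ (Fin m)) (hp : ‖p‖ = 1)
    (hy : ‖y‖ = 1) : |⟪p, y⟫| ≤ 1 := by
  have := abs_real_inner_le_norm p y
  simpa [hp, hy] using this

lemma aux_norm_one {m : ℕ} (p y : EuclideanSpace ℝ (Fin m)) (hp : ‖p‖ = 1)
    (hy : ‖y‖ = 1) (u : ℝ) (hu : |u| < 1) :
    ‖mobiusT (u • p) y‖ = 1 := by
  set s := ⟪p, y⟫ with hs_def
  have hD : 0 < 1 + 2 * u * s + u ^ 2 := aux_Dpos hu (aux_inner_le_one p y hp hy)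
  have hDne : (1 + 2 * u * s + u ^ 2) ≠ 0 := ne_of_gt hD
  rw [aux_expand p y hp hy u]
  have h2 := aux_norm p y hp hy
    ((2 * u * (1 + u * s)) / (1 + 2 * u * s + u ^ 2))
    ((1 - u ^ 2) / (1 + 2 * u * s + u ^ 2))
  have h3 : ‖((2 * u * (1 + u * s)) / (1 + 2 * u * s + u ^ 2)) • p
      + ((1 - u ^ 2) / (1 + 2 * u * s + u ^ 2)) • y‖ ^ 2 = 1 := by
    rw [h2, ← hs_def]
    field_simp
    ring
  nlinarith [norm_nonneg (((2 * u * (1 + u * s)) / (1 + 2 * u * s + u ^ 2)) • p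
      + ((1 - u ^ 2) / (1 + 2 * u * s + u ^ 2)) • y)]

lemma aux_inner_val {m : ℕ} (p y : EuclideanSpace ℝ (Fin m)) (hp : ‖p‖ = 1)
    (hy : ‖y‖ = 1) (u : ℝ) (hu : |u| < 1) :
    ⟪p, mobiusT (u • p) y⟫
      = (2 * u + ⟪p, y⟫ * (1 + u ^ 2)) / (1 + 2 * u * ⟪p, y⟫ + u ^ 2) := by
  set s := ⟪p, y⟫ with hs_def
  have hD : 0 < 1 + 2 * u * s + u ^ 2 := aux_Dpos hu (aux_inner_le_one p y hp hy)
  have hDne : (1 + 2 * u * s + u ^ 2) ≠ 0 := ne_of_gt hD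
  rw [aux_expand p y hp hy u, aux_inner p y hp, ← hs_def]
  field_simp
  ring

lemma aux_invol {m : ℕ} (p y : EuclideanSpace ℝ (Fin m)) (hp : ‖p‖ = 1)
    (hy : ‖y‖ = 1) (u : ℝ) (hu : |u| < 1) :
    mobiusT ((-u) • p) (mobiusT (u • p) y) = y := by
  set s := ⟪p, y⟫ with hs_def
  have hs1 : |s| ≤ 1 := aux_inner_le_one p y hp hy
  have hD : 0 < 1 + 2 * u * s + u ^ 2 := aux_Dpos hu hs1
  have hDne : (1 + 2 * u * s + u ^ 2) ≠ 0 := ne_of_gt hD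
  have hu2 : (1 : ℝ) - u ^ 2 ≠ 0 := by
    have : u ^ 2 < 1 := by nlinarith [sq_abs u, abs_nonneg u]
    nlinarith
  have hz1 : ‖mobiusT (u • p) y‖ = 1 := aux_norm_one p y hp hy u hu
  rw [aux_expand p (mobiusT (u • p) y) hp hz1 (-u), aux_inner_val p y hp hy u hu,
    aux_expand p y hp hy u, ← hs_def]
  have hE : 1 + 2 * (-u) * ((2 * u + s * (1 + u ^ 2)) / (1 + 2 * u * s + u ^ 2))
      + (-u) ^ 2 = (1 - u ^ 2) ^ 2 / (1 + 2 * u * s + u ^ 2) := by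
    field_simp
    ring
  rw [hE]
  match_scalars <;> (field_simp; ring_nf) <;> linear_combination mul_inv_cancel₀ hDne

/-- The image of the closed hemisphere `H_p = {y ∈ S^{m−1} : y·p ≤ 0}` under the
Möbius transformation `T_{tp}` equals the spherical cap
`{y ∈ S^{m−1} : y·p ≤ 2t/(1+t²)}`. -/
theorem mobius_image_hemisphere_eq_cap (m : ℕ) (p : EuclideanSpace ℝ (Fin m))
    (hp : ‖p‖ = 1) (t : ℝ) (ht0 : 0 ≤ t) (ht1 : t < 1) :
    mobiusT (t • p) '' {y : EuclideanSpace ℝ (Fin m) | ‖y‖ = 1 ∧ ⟪y, p⟫ ≤ 0}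
      = {y : EuclideanSpace ℝ (Fin m) | ‖y‖ = 1 ∧ ⟪y, p⟫ ≤ 2 * t / (1 + t ^ 2)} := by
  have ht : |t| < 1 := by rwa [abs_of_nonneg ht0]
  have htn : |(-t)| < 1 := by rwa [abs_neg]
  have hpos : (0 : ℝ) < 1 + t ^ 2 := by positivity
  ext z
  simp only [Set.mem_image, Set.mem_setOf_eq]
  constructor
  · rintro ⟨y, ⟨hy, hyp⟩, rfl⟩
    have hs1 : |⟪p, y⟫| ≤ 1 := aux_inner_le_one p y hp hy
    have hs0 : ⟪p, y⟫ ≤ 0 := by rwa [real_inner_comm] at hyp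
    have hD : 0 < 1 + 2 * t * ⟪p, y⟫ + t ^ 2 := aux_Dpos ht hs1
    refine ⟨aux_norm_one p y hp hy t ht, ?_⟩
    rw [real_inner_comm, aux_inner_val p y hp hy t ht, div_le_div_iff₀ hD hpos]
    nlinarith [mul_nonneg (neg_nonneg.2 hs0) (sq_nonneg (1 - t ^ 2))]
  · rintro ⟨hz, hzp⟩
    have hs1 : |⟪p, z⟫| ≤ 1 := aux_inner_le_one p z hp hz
    have hzp' : ⟪p, z⟫ ≤ 2 * t / (1 + t ^ 2) := by rwa [real_inner_comm] at hzp
    have hD' : 0 < 1 + 2 * (-t) * ⟪p, z⟫ + (-t) ^ 2 := aux_Dpos htn hs1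
    refine ⟨mobiusT ((-t) • p) z, ⟨aux_norm_one p z hp hz (-t) htn, ?_⟩, ?_⟩
    · rw [real_inner_comm, aux_inner_val p z hp hz (-t) htn]
      apply div_nonpos_of_nonpos_of_nonneg
      · have h4 : ⟪p, z⟫ * (1 + t ^ 2) ≤ 2 * t := by
          rw [le_div_iff₀ hpos] at hzp'
          linarith
        nlinarith [h4]
      · linarith [hD']
    · have := aux_invol p z hp hz (-t) htn
      rwa [neg_neg] at this
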